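/- Let p be an odd prime, w an integer with 1 ≤ w ≤ p−1, and β a primitive p²-th root of unity in the algebraic closure of F_2. If 2 ∈ D_{ℓ₀} for some ℓ₀ with 1 ≤ ℓ₀ ≤ p−1, then D_l(β^n) ≠ 1 for all l ∈ {0,...,p−1} and all integers n with gcd(n,p) = 1. -/

import Mathlib

open Finset

noncomputable section

/-- The Fermat quotient `q_p(u)`: for `gcd(u,p)=1` the unique integer in `[0,p-1]`
congruent to `(u^(p-1)-1)/p` mod `p`, and `0` when `p ∣ u`. -/
def fermatQuot (p u : ℕ) : ℕ :=
  if p ∣ u then 0 else ((u ^ (p - 1) - 1) / p) % p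

/-- The polynomial quotient `q_{p,w}(u)`: the unique integer in `[0,p-1]`
congruent to `(u^w - u^(w*p))/p` mod `p`. -/
def polyQuot (p w u : ℕ) : ℤ :=
  (((u : ℤ) ^ w - (u : ℤ) ^ (w * p)) / (p : ℤ)) % (p : ℤ)

/-- The binary sequence `(f_u)`: `f_u = 0` iff the Legendre symbol of `q_{p,w}(u)`
is `1` or `q_{p,w}(u) = 0`. -/
def legSeq (p : ℕ) [Fact p.Prime] (w : ℕ) (u : ℕ) : ZMod 2 :=
  if legendreSym p (polyQuot p w u) = 1 ∨ polyQuot p w u = 0 then 0 else 1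

/-- The linear complexity of a binary sequence: the least order `L` of a linear
recurrence `s_{u+L} = c_{L-1} s_{u+L-1} + ⋯ + c_0 s_u` with `c_0 = 1` satisfied by `s`. -/
def linearComplexity (s : ℕ → ZMod 2) : ℕ :=
  sInf {L : ℕ | ∃ c : Fin L → ZMod 2,
    (∀ h : 0 < L, c ⟨0, h⟩ = 1) ∧
    ∀ u : ℕ, s (u + L) = ∑ i : Fin L, c i * s (u + (i : ℕ))}

/-- The map `H_w : u ↦ -w q_p(u) mod p` for `gcd(u,p)=1`, `0` if `p ∣ u` and `w ≥ 2`,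
and `k mod p` if `u ≡ kp (mod p²)` and `w = 1`. -/
def Hquot (p w u : ℕ) : ZMod p :=
  if p ∣ u then (if w = 1 then ((u / p : ℕ) : ZMod p) else 0)
  else -(w : ZMod p) * ((fermatQuot p u : ℕ) : ZMod p)

/-- `D_l = {u : 0 ≤ u < p², gcd(u,p) = 1, H_w(u) ≡ l (mod p)}`. -/
def Dset (p w : ℕ) (l : ZMod p) : Finset ℕ :=
  (Finset.range (p ^ 2)).filter fun u => Nat.Coprime u p ∧ Hquot p w u = l

/-- `Q_l = {u ∈ D_l : (u/p) = 1}`. -/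
def Qset (p : ℕ) [Fact p.Prime] (w : ℕ) (l : ZMod p) : Finset ℕ :=
  (Dset p w l).filter fun u => legendreSym p u = 1

/-- `N_l = {u ∈ D_l : (u/p) = -1}`. -/
def Nset (p : ℕ) [Fact p.Prime] (w : ℕ) (l : ZMod p) : Finset ℕ :=
  (Dset p w l).filter fun u => legendreSym p u = -1

/-- The quadratic residues modulo `p` in `{1,…,p-1}`. -/
def QRes (p : ℕ) [Fact p.Prime] : Finset ℕ :=
  (Finset.Ico 1 p).filter fun l => legendreSym p l = 1

/-- The quadratic non-residues modulo `p` in `{1,…,p-1}`. -/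
def QNR (p : ℕ) [Fact p.Prime] : Finset ℕ :=
  (Finset.Ico 1 p).filter fun l => legendreSym p l = -1

/-- Evaluation of `G^odd(x) = Σ_{l∈N} D_l(x) + Σ_{l=1}^{p-1} N_l(x)` at a point of the
algebraic closure of `F_2`. -/
def GoddEval (p : ℕ) [Fact p.Prime] (w : ℕ) (x : AlgebraicClosure (ZMod 2)) :
    AlgebraicClosure (ZMod 2) :=
  (∑ l ∈ QNR p, ∑ u ∈ Dset p w (l : ZMod p), x ^ u)
    + ∑ l ∈ Finset.Ico 1 p, ∑ u ∈ Nset p w (l : ZMod p), x ^ u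

/-- Evaluation of `G^one(x) = Σ_{l∈N} D_l(x) + Σ_{l=1}^{p-1} N_l(x) + Σ_{l∈N} x^{lp}`. -/
def GoneEval (p : ℕ) [Fact p.Prime] (w : ℕ) (x : AlgebraicClosure (ZMod 2)) :
    AlgebraicClosure (ZMod 2) :=
  GoddEval p w x + ∑ l ∈ QNR p, x ^ (l * p)

section Aux
variable {p : ℕ} [hp : Fact p.Prime]

lemma dvd_pow_sub_one {u : ℕ} (hu : ¬ p ∣ u) : (p : ℤ) ∣ (u : ℤ) ^ (p - 1) - 1 := by
  have h0 : (u : ZMod p) ≠ 0 := by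
    simpa [ZMod.natCast_eq_zero_iff] using hu
  have h1 : (u : ZMod p) ^ (p - 1) = 1 := ZMod.pow_card_sub_one_eq_one h0
  have : (((u : ℤ) ^ (p - 1) - 1 : ℤ) : ZMod p) = 0 := by push_cast [h1]; ring
  exact (ZMod.intCast_zmod_eq_zero_iff_dvd _ p).mp this

/-- integer Fermat quotient -/
def Qi (p u : ℕ) : ℤ := ((u : ℤ) ^ (p - 1) - 1) / p

lemma fq_cast {u : ℕ} (hu : ¬ p ∣ u) :
    ((fermatQuot p u : ℕ) : ZMod p) = ((Qi p u : ℤ) : ZMod p) := by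
  have hu1 : 1 ≤ u := Nat.one_le_iff_ne_zero.mpr (by rintro rfl; exact hu (dvd_zero p))
  have hpow : 1 ≤ u ^ (p - 1) := Nat.one_le_pow _ _ hu1
  rw [fermatQuot, if_neg hu, ZMod.natCast_mod]
  rw [Qi, show ((((u : ℤ) ^ (p - 1) - 1) / ↑p : ℤ)) = (((u ^ (p - 1) - 1) / p : ℕ) : ℤ) by
    rw [Int.natCast_ediv]; congr 1; push_cast [Nat.cast_sub hpow]; ring]
  norm_cast


lemma Qi_spec {u : ℕ} (hu : ¬ p ∣ u) : (p : ℤ) * Qi p u = (u : ℤ) ^ (p - 1) - 1 :=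
  Int.mul_ediv_cancel' (dvd_pow_sub_one hu)

lemma pow_cast_eq_one {u : ℕ} (hu : ¬ p ∣ u) : (((u : ℤ) ^ (p - 1) : ℤ) : ZMod p) = 1 := by
  have h0 : (u : ZMod p) ≠ 0 := by
    simpa [ZMod.natCast_eq_zero_iff] using hu
  push_cast
  exact ZMod.pow_card_sub_one_eq_one h0

lemma Qi_mul {a b : ℕ} (ha : ¬ p ∣ a) (hb : ¬ p ∣ b) :
    ((Qi p (a * b) : ℤ) : ZMod p) = ((Qi p a : ℤ) : ZMod p) + ((Qi p b : ℤ) : ZMod p) := by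
  have hab : ¬ p ∣ a * b := fun h =>
    ((hp.out.dvd_mul).mp h).elim ha hb
  have hpne : (p : ℤ) ≠ 0 := Int.natCast_ne_zero.mpr hp.out.ne_zero
  have key : (p : ℤ) * Qi p (a * b) = (p : ℤ) * (Qi p a * (b : ℤ) ^ (p - 1) + Qi p b) := by
    rw [Qi_spec hab]
    have e1 := Qi_spec ha
    have e2 := Qi_spec hb
    push_cast
    rw [mul_pow]
    linear_combination (-((b : ℤ) ^ (p - 1) * e1 + e2))
  have key2 : Qi p (a * b) = Qi p a * (b : ℤ) ^ (p - 1) + Qi p b :=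
    mul_left_cancel₀ hpne key
  rw [key2]
  have h1 : ((b : ZMod p)) ^ (p - 1) = 1 :=
    ZMod.pow_card_sub_one_eq_one (by simpa [ZMod.natCast_eq_zero_iff] using hb)
  push_cast
  rw [h1]
  ring

lemma Qi_modeq {u v : ℕ} (hu : ¬ p ∣ u) (hv : ¬ p ∣ v) (h : u ≡ v [MOD p ^ 2]) :
    ((Qi p u : ℤ) : ZMod p) = ((Qi p v : ℤ) : ZMod p) := by
  have hz : (u : ℤ) ≡ (v : ℤ) [ZMOD (p ^ 2 : ℕ)] := Int.natCast_modEq_iff.mpr h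
  have hz2 : (u : ℤ) ^ (p - 1) ≡ (v : ℤ) ^ (p - 1) [ZMOD (p ^ 2 : ℕ)] := hz.pow _
  have hdvd : ((p : ℤ) ^ 2) ∣ (u : ℤ) ^ (p - 1) - (v : ℤ) ^ (p - 1) := by
    have := (Int.ModEq.dvd hz2.symm)
    simpa [Int.emod_emod_of_dvd] using (by push_cast at this ⊢; exact this : ((p:ℤ)^2) ∣ (u : ℤ) ^ (p - 1) - (v : ℤ) ^ (p - 1))
  have hpne : (p : ℤ) ≠ 0 := Int.natCast_ne_zero.mpr hp.out.ne_zero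
  have hdiff : (p : ℤ) * (Qi p u - Qi p v) = (u : ℤ) ^ (p - 1) - (v : ℤ) ^ (p - 1) := by
    rw [mul_sub, Qi_spec hu, Qi_spec hv]; ring
  have : (p : ℤ) ∣ Qi p u - Qi p v := by
    rcases hdvd with ⟨k, hk⟩
    refine ⟨k, mul_left_cancel₀ hpne ?_⟩
    rw [hdiff, hk]; ring
  have := (ZMod.intCast_zmod_eq_zero_iff_dvd _ p).mpr this
  push_cast at this
  linear_combination this


lemma not_dvd_of_coprime' {u : ℕ} (h : Nat.Coprime u p) : ¬ p ∣ u :=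
  (hp.out.coprime_iff_not_dvd).mp (Nat.coprime_comm.mp h)

lemma Hquot_coprime {w u : ℕ} (hu : ¬ p ∣ u) :
    Hquot p w u = -(w : ZMod p) * ((Qi p u : ℤ) : ZMod p) := by
  rw [Hquot, if_neg hu, fq_cast hu]

lemma not_dvd_mod_sq {a : ℕ} (ha : ¬ p ∣ a) : ¬ p ∣ a % p ^ 2 := by
  intro h
  apply ha
  have h2 : p ∣ p ^ 2 * (a / p ^ 2) + a % p ^ 2 :=
    Nat.dvd_add (dvd_mul_of_dvd_left (dvd_pow_self p two_ne_zero) _) h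
  rwa [Nat.div_add_mod] at h2

lemma Hquot_mul_mod {w a u : ℕ} (ha : ¬ p ∣ a) (hu : ¬ p ∣ u) :
    Hquot p w ((a * u) % p ^ 2) = Hquot p w a + Hquot p w u := by
  have hau : ¬ p ∣ a * u := fun h => ((hp.out.dvd_mul).mp h).elim ha hu
  have hv : ¬ p ∣ (a * u) % p ^ 2 := not_dvd_mod_sq hau
  rw [Hquot_coprime hv, Hquot_coprime ha, Hquot_coprime hu,
    Qi_modeq hv hau (Nat.mod_modEq _ _), Qi_mul ha hu]
  ring

lemma mem_Dset_mul {w a : ℕ} (ha : ¬ p ∣ a) {l : ZMod p} {u : ℕ} (hu : u ∈ Dset p w l) :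
    (a * u) % p ^ 2 ∈ Dset p w (Hquot p w a + l) := by
  simp only [Dset, mem_filter, mem_range] at hu ⊢
  obtain ⟨h1, h2, h3⟩ := hu
  have hu' : ¬ p ∣ u := not_dvd_of_coprime' h2
  have hau : ¬ p ∣ a * u := fun h => ((hp.out.dvd_mul).mp h).elim ha hu'
  have hv : ¬ p ∣ (a * u) % p ^ 2 := not_dvd_mod_sq hau
  refine ⟨Nat.mod_lt _ (pow_pos hp.out.pos 2), ?_, ?_⟩
  · exact Nat.coprime_comm.mp ((hp.out.coprime_iff_not_dvd).mpr hv)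
  · rw [Hquot_mul_mod ha hu', h3]

end Aux

/-- Lemma: if `2 ∈ D_{ℓ₀}` with `1 ≤ ℓ₀ ≤ p-1`, then `D_l(β^n) ≠ 1` for all `l` and all
integers `n` coprime to `p`. -/
theorem Dset_eval_ne_one (p : ℕ) [hp : Fact p.Prime] (hodd : p ≠ 2)
    (w : ℕ) (hw1 : 1 ≤ w) (hw2 : w ≤ p - 1)
    (β : AlgebraicClosure (ZMod 2)) (hβ : IsPrimitiveRoot β (p ^ 2))
    (ℓ₀ : ℕ) (hℓ₀1 : 1 ≤ ℓ₀) (hℓ₀2 : ℓ₀ ≤ p - 1) (h2 : 2 ∈ Dset p w (ℓ₀ : ZMod p)) :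
    ∀ l : ℕ, l ≤ p - 1 → ∀ n : ℤ, Int.gcd n p = 1 →
      ∑ u ∈ Dset p w (l : ZMod p), (β ^ n) ^ u ≠ 1 := by
  haveI : NeZero p := ⟨hp.out.ne_zero⟩
  have hp1 : 1 < p := hp.out.one_lt
  have hpp : 1 < p ^ 2 := one_lt_pow₀ hp1 two_ne_zero
  have hppos : 0 < p ^ 2 := by omega
  have hp2 : ¬ p ∣ 2 := fun h => hodd ((Nat.prime_dvd_prime_iff_eq hp.out Nat.prime_two).mp h)
  have hH2 : Hquot p w 2 = (ℓ₀ : ZMod p) := by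
    simp only [Dset, mem_filter] at h2; exact h2.2.2
  have hl₀ne : (ℓ₀ : ZMod p) ≠ 0 := by
    rw [Ne, ZMod.natCast_eq_zero_iff]
    intro h
    have := Nat.le_of_dvd (by omega) h
    omega
  -- the inverse of 2 mod p²
  have hoddp : Odd p := hp.out.odd_of_ne_two hodd
  set c : ℕ := (p ^ 2 + 1) / 2 with hc_def
  have h2c : 2 * c = p ^ 2 + 1 := Nat.mul_div_cancel' (Even.two_dvd (hoddp.pow.add_one))
  have hpc : ¬ p ∣ c := by
    intro h
    have h1 : p ∣ p ^ 2 + 1 := by rw [← h2c]; exact Dvd.dvd.mul_left h 2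
    have h2 : p = 1 := Nat.dvd_one.mp ((Nat.dvd_add_right (dvd_pow_self p two_ne_zero)).mp h1)
    omega
  have hH1 : Hquot p w 1 = 0 := by
    have hf : fermatQuot p 1 = 0 := by simp [fermatQuot]
    rw [Hquot, if_neg (by rw [Nat.dvd_one]; omega), hf]
    simp
  have h2cm : (2 * c) % p ^ 2 = 1 := by
    rw [h2c, Nat.add_mod_left]; exact Nat.mod_eq_of_lt hpp
  have hc2m : (c * 2) % p ^ 2 = 1 := by rw [mul_comm]; exact h2cm
  have hHc : Hquot p w c = -(ℓ₀ : ZMod p) := by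
    have h3 := Hquot_mul_mod (p := p) (w := w) hp2 hpc
    rw [h2cm, hH1, hH2] at h3
    linear_combination -h3
  intro l _hl n hn hcon
  -- replace β ^ n by β ^ m with m natural
  have hβne : β ≠ 0 := hβ.ne_zero (by positivity)
  set m : ℕ := (n % (p ^ 2 : ℕ)).toNat with hm_def
  have hnn : (0:ℤ) ≤ n % ((p ^ 2 : ℕ) : ℤ) := Int.emod_nonneg n (by positivity)
  have hmz : (m : ℤ) = n % ((p ^ 2 : ℕ) : ℤ) := Int.toNat_of_nonneg hnn
  have hdvd : ((p ^ 2 : ℕ) : ℤ) ∣ n - (m : ℤ) := by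
    refine ⟨n / ((p ^ 2 : ℕ) : ℤ), ?_⟩
    have h4 := Int.mul_ediv_add_emod n ((p ^ 2 : ℕ) : ℤ)
    rw [hmz]; linarith
  have hone : β ^ (n - (m : ℤ)) = 1 := (hβ.zpow_eq_one_iff_dvd _).mpr hdvd
  have hβm : β ^ n = β ^ m := by
    have h5 : β ^ n = β ^ (m : ℤ) * β ^ (n - (m : ℤ)) := by
      rw [← zpow_add₀ hβne]; congr 1; ring
    rw [h5, hone, mul_one, zpow_natCast]
  -- m is coprime to p²
  have hpm : ¬ p ∣ m := by
    intro hdm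
    have h1 : (p:ℤ) ∣ (m:ℤ) := Int.natCast_dvd_natCast.mpr hdm
    have h6 : (p:ℤ) ∣ n - (m:ℤ) := dvd_trans ⟨p, by push_cast; ring⟩ hdvd
    have h2 : (p:ℤ) ∣ n := by
      have := dvd_add h6 h1; simpa using this
    obtain ⟨a, b, hab⟩ := Int.isCoprime_iff_gcd_eq_one.mpr hn
    have h7 : (p:ℤ) ∣ 1 := by
      rw [← hab]; exact dvd_add (h2.mul_left a) (Dvd.dvd.mul_left dvd_rfl b)
    have h8 := Int.le_of_dvd one_pos h7
    have : (2:ℤ) ≤ (p:ℤ) := by exact_mod_cast hp1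
    omega
  have hcopm : Nat.Coprime m (p ^ 2) :=
    (Nat.coprime_comm.mp ((hp.out.coprime_iff_not_dvd).mpr hpm)).pow_right 2
  have hprim : IsPrimitiveRoot (β ^ m) (p ^ 2) := hβ.pow_of_coprime m hcopm
  rw [hβm] at hcon
  set x : AlgebraicClosure (ZMod 2) := β ^ m with hx_def
  have hx1 : x ≠ 1 := hprim.ne_one hpp
  have hxp : x ^ p ≠ 1 := hprim.pow_ne_one_of_pos_of_lt hp.out.ne_zero (by nlinarith)
  have hxpp : x ^ (p ^ 2) = 1 := hprim.pow_eq_one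
  have hxmod : ∀ k : ℕ, x ^ (k % p ^ 2) = x ^ k := by
    intro k
    conv_rhs => rw [← Nat.div_add_mod k (p ^ 2)]
    rw [pow_add, pow_mul, hxpp, one_pow, one_mul]
  set S : ZMod p → AlgebraicClosure (ZMod 2) := fun t => ∑ u ∈ Dset p w t, x ^ u with hS_def
  -- inversion helper
  have hinvgen : ∀ r s : ℕ, (r * s) % p ^ 2 = 1 → ∀ y, y < p ^ 2 →
      (r * ((s * y) % p ^ 2)) % p ^ 2 = y := by
    intro r s hrs y hy
    have hrs' : r * s ≡ 1 [MOD p ^ 2] := by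
      unfold Nat.ModEq; rw [hrs, Nat.mod_eq_of_lt hpp]
    have h1 : r * ((s * y) % p ^ 2) ≡ r * (s * y) [MOD p ^ 2] :=
      (Nat.mod_modEq _ _).mul_left r
    have h2 : r * (s * y) ≡ 1 * y [MOD p ^ 2] := by
      rw [← mul_assoc]; exact hrs'.mul_right y
    have h3 := h1.trans h2
    rw [one_mul] at h3
    calc (r * ((s * y) % p ^ 2)) % p ^ 2 = y % p ^ 2 := h3
    _ = y := Nat.mod_eq_of_lt hy
  -- Frobenius step
  have hstep : ∀ t : ZMod p, S t ^ 2 = S ((ℓ₀ : ZMod p) + t) := by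
    intro t
    rw [hS_def]
    simp only
    rw [CharTwo.sum_sq]
    rw [Finset.sum_congr rfl (g := fun u => x ^ ((2 * u) % p ^ 2))
      (fun u _ => by show (x ^ u) ^ 2 = x ^ ((2 * u) % p ^ 2); rw [hxmod, ← pow_mul, mul_comm])]
    refine Finset.sum_nbij' (i := fun u => (2 * u) % p ^ 2) (j := fun v => (c * v) % p ^ 2)
      ?_ ?_ ?_ ?_ ?_
    · intro u hu
      have h9 := mem_Dset_mul (w := w) hp2 hu
      rwa [hH2] at h9
    · intro v hv
      have h9 := mem_Dset_mul (w := w) hpc hv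
      rwa [hHc, neg_add_cancel_left] at h9
    · intro u hu
      have hu' : u < p ^ 2 := Finset.mem_range.mp (Finset.mem_filter.mp hu).1
      exact hinvgen c 2 hc2m u hu'
    · intro v hv
      have hv' : v < p ^ 2 := Finset.mem_range.mp (Finset.mem_filter.mp hv).1
      exact hinvgen 2 c h2cm v hv'
    · intro u _; rfl
  -- propagation: all S t equal 1
  have hiter : ∀ k : ℕ, S ((l : ZMod p) + k • (ℓ₀ : ZMod p)) = 1 := by
    intro k
    induction k with
    | zero => simpa using hcon
    | succ k ih =>
      have h10 : (l : ZMod p) + (k+1) • (ℓ₀ : ZMod p)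
          = (ℓ₀ : ZMod p) + ((l : ZMod p) + k • (ℓ₀ : ZMod p)) := by
        rw [succ_nsmul]; ring
      rw [h10, ← hstep, ih, one_pow]
  have hall : ∀ t : ZMod p, S t = 1 := by
    intro t
    have hk := hiter (((t - (l : ZMod p)) * (ℓ₀ : ZMod p)⁻¹).val)
    have h11 : (l : ZMod p) + (((t - (l : ZMod p)) * (ℓ₀ : ZMod p)⁻¹).val) • (ℓ₀ : ZMod p) = t := by
      rw [nsmul_eq_mul, ZMod.natCast_val, ZMod.cast_id, mul_assoc,
        inv_mul_cancel₀ hl₀ne, mul_one]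
      ring
    rwa [h11] at hk
  -- the total sum is (p : K) = 1
  have hsum1 : ∑ t : ZMod p, S t = ((p : ℕ) : AlgebraicClosure (ZMod 2)) := by
    rw [Finset.sum_congr rfl (fun t _ => hall t)]
    simp [Finset.card_univ, ZMod.card]
  have hchar : ((p : ℕ) : AlgebraicClosure (ZMod 2)) = 1 := by
    have h2z : ((2 : ℕ) : AlgebraicClosure (ZMod 2)) = 0 :=
      CharP.cast_eq_zero (AlgebraicClosure (ZMod 2)) 2
    have hpm2 : p % 2 = 1 := Nat.odd_iff.mp hoddp
    rw [show p = 2 * (p / 2) + 1 by omega, Nat.cast_add, Nat.cast_mul, h2z]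
    simp
  -- the total sum is 0
  have hfib : ∑ t : ZMod p, S t
      = ∑ u ∈ (Finset.range (p ^ 2)).filter (fun u => Nat.Coprime u p), x ^ u := by
    rw [hS_def]
    simp only
    have hD : ∀ t : ZMod p, Dset p w t
        = ((Finset.range (p ^ 2)).filter (fun u => Nat.Coprime u p)).filter
          (fun u => Hquot p w u = t) := by
      intro t; rw [Dset, Finset.filter_filter]
    rw [Finset.sum_congr rfl (fun t _ => by rw [hD t])]
    exact Finset.sum_fiberwise _ _ _
  have geom1 : ∑ u ∈ Finset.range (p ^ 2), x ^ u = 0 := by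
    rw [geom_sum_eq hx1, hxpp]; simp
  have hnotset : (Finset.range (p ^ 2)).filter (fun u => ¬ Nat.Coprime u p)
      = (Finset.range p).image (fun k => p * k) := by
    ext u
    simp only [Finset.mem_filter, Finset.mem_range, Finset.mem_image]
    constructor
    · rintro ⟨hu, hnc⟩
      have hd : p ∣ u := by
        by_contra hnd
        exact hnc (Nat.coprime_comm.mp ((hp.out.coprime_iff_not_dvd).mpr hnd))
      obtain ⟨k, rfl⟩ := hd
      refine ⟨k, ?_, rfl⟩
      rw [pow_two] at hu
      exact lt_of_mul_lt_mul_left hu (Nat.zero_le p)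
    · rintro ⟨k, hk, rfl⟩
      constructor
      · rw [pow_two]; exact Nat.mul_lt_mul_of_le_of_lt (le_refl p) hk hp.out.pos
      · intro hco
        have : ¬ p ∣ p * k := not_dvd_of_coprime' hco
        exact this (dvd_mul_right p k)
  have geom2 : ∑ u ∈ (Finset.range (p ^ 2)).filter (fun u => ¬ Nat.Coprime u p), x ^ u = 0 := by
    rw [hnotset, Finset.sum_image (fun a _ b _ h => Nat.eq_of_mul_eq_mul_left hp.out.pos h)]
    have h12 : ∀ k ∈ Finset.range p, x ^ (p * k) = (x ^ p) ^ k := by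
      intro k _; exact pow_mul x p k
    rw [Finset.sum_congr rfl h12, geom_sum_eq hxp, ← pow_mul, ← pow_two, hxpp]
    simp
  have hsplit := Finset.sum_filter_add_sum_filter_not (Finset.range (p ^ 2))
    (fun u => Nat.Coprime u p) (fun u => x ^ u)
  rw [geom1, geom2] at hsplit
  have hzero : ∑ u ∈ (Finset.range (p ^ 2)).filter (fun u => Nat.Coprime u p), x ^ u = 0 := by
    linear_combination hsplit
  have : (1 : AlgebraicClosure (ZMod 2)) = 0 := by
    rw [← hchar, ← hsum1, hfib, hzero]
  exact one_ne_zero this
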